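/- Along a normal extremal trajectory of the Cartan group starting at the identity (so x(0)=…=w(0)=0) with h₁u₁ + h₂u₂ ≡ 1 a.e., one has for all t: φ₁x(t) + φ₂y(t) + 2φ₃z(t) + 3φ₄v(t) + 3φ₅w(t) + (φ₄/2)x(t)z(t) + (φ₅/2)y(t)z(t) = t. -/

import Mathlib

open MeasureTheory Set

/-- Lipschitz-on image of a null set is null. -/
lemma lip_null_image {f : ℝ → ℝ} {K : NNReal} {s : Set ℝ}
    (hf : LipschitzOnWith K f s) (hs : volume s = 0) : volume (f '' s) = 0 := by
  have h := hf.hausdorffMeasure_image_le (zero_le_one)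
  rw [MeasureTheory.hausdorffMeasure_real] at h
  rw [hs, ENNReal.rpow_one, mul_zero] at h
  exact le_antisymm h zero_le

/-- A Lipschitz function with a.e. zero derivative is constant on intervals. -/
lemma const_of_ae_deriv_zero {f : ℝ → ℝ} {K : NNReal} {a b : ℝ} (hab : a ≤ b)
    (hl : LipschitzOnWith K f (Set.Icc a b))
    (hd : ∀ᵐ t ∂(volume : Measure ℝ), HasDerivAt f 0 t) : f b = f a := by
  have hnull : volume {t : ℝ | ¬ HasDerivAt f 0 t} = 0 := by
    simpa [ae_iff] using hd
  obtain ⟨N, hNsub, hNmeas, hNnull⟩ := exists_measurable_superset_of_null hnull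
  set s : Set ℝ := Icc a b \ N with hs_def
  have hsm : MeasurableSet s := measurableSet_Icc.diff hNmeas
  have himg1 : volume (f '' s) = 0 := by
    have hder : ∀ t ∈ s, HasFDerivWithinAt f
        ((1 : ℝ →L[ℝ] ℝ).smulRight (0 : ℝ)) s t := by
      intro t ht
      have : HasDerivAt f 0 t := by
        by_contra hcon
        exact ht.2 (hNsub hcon)
      exact this.hasFDerivAt.hasFDerivWithinAt
    have h := MeasureTheory.addHaar_image_le_lintegral_abs_det_fderiv volume hsm hder
    simp only [ContinuousLinearMap.smulRight_one_eq_toSpanSingleton, ContinuousLinearMap.det_toSpanSingleton, abs_zero, ENNReal.ofReal_zero,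
      lintegral_zero, le_zero_iff] at h
    exact h
  have himg2 : volume (f '' (Icc a b ∩ N)) = 0 :=
    lip_null_image (hl.mono inter_subset_left)
      (measure_mono_null inter_subset_right hNnull)
  have hcover : volume (f '' Icc a b) = 0 := by
    have : f '' Icc a b ⊆ f '' s ∪ f '' (Icc a b ∩ N) := by
      rw [← image_union]
      apply image_mono
      intro t ht
      by_cases h : t ∈ N
      · exact Or.inr ⟨ht, h⟩
      · exact Or.inl ⟨ht, h⟩
    exact measure_mono_null this (measure_union_null himg1 himg2)
  have hsub : uIcc (f a) (f b) ⊆ f '' Icc a b := by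
    have := intermediate_value_uIcc (f := f) (a := a) (b := b)
      (by rw [uIcc_of_le hab]; exact hl.continuousOn)
    rwa [uIcc_of_le hab] at this
  have hvol : volume (uIcc (f a) (f b)) = 0 := measure_mono_null hsub hcover
  rw [uIcc, Real.volume_Icc] at hvol
  have : max (f a) (f b) - min (f a) (f b) ≤ 0 := by
    by_contra hcon
    push_neg at hcon
    rw [ENNReal.ofReal_eq_zero] at hvol
    linarith
  have h1 := le_max_left (f a) (f b)
  have h2 := le_max_right (f a) (f b)
  have h3 := min_le_left (f a) (f b)
  have h4 := min_le_right (f a) (f b)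
  linarith [le_antisymm (by linarith : max (f a) (f b) ≤ min (f a) (f b)) (min_le_max)]

/-- Locally Lipschitz on compact intervals. -/
def LocLip (f : ℝ → ℝ) : Prop := ∀ a b : ℝ, ∃ K : NNReal, LipschitzOnWith K f (Set.Icc a b)

lemma LocLip.of_lip {f : ℝ → ℝ} (h : ∃ K, LipschitzWith K f) : LocLip f := by
  obtain ⟨K, hK⟩ := h
  exact fun a b => ⟨K, fun p _ q _ => hK p q⟩

lemma locLip_id : LocLip (fun t : ℝ => t) :=
  LocLip.of_lip ⟨1, LipschitzWith.id⟩

lemma LocLip.add {f g : ℝ → ℝ} (hf : LocLip f) (hg : LocLip g) :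
    LocLip (fun t => f t + g t) := by
  intro a b
  obtain ⟨Kf, hKf⟩ := hf a b
  obtain ⟨Kg, hKg⟩ := hg a b
  refine ⟨Kf + Kg, LipschitzOnWith.of_dist_le_mul fun s hs t ht => ?_⟩
  have h1 := hKf.dist_le_mul s hs t ht
  have h2 := hKg.dist_le_mul s hs t ht
  rw [Real.dist_eq] at h1 h2 ⊢
  have habs : |(f s + g s) - (f t + g t)| ≤ |f s - f t| + |g s - g t| := by
    rw [show (f s + g s) - (f t + g t) = (f s - f t) + (g s - g t) by ring]
    exact abs_add_le _ _
  push_cast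
  linarith

lemma LocLip.sub {f g : ℝ → ℝ} (hf : LocLip f) (hg : LocLip g) :
    LocLip (fun t => f t - g t) := by
  intro a b
  obtain ⟨Kf, hKf⟩ := hf a b
  obtain ⟨Kg, hKg⟩ := hg a b
  refine ⟨Kf + Kg, LipschitzOnWith.of_dist_le_mul fun s hs t ht => ?_⟩
  have h1 := hKf.dist_le_mul s hs t ht
  have h2 := hKg.dist_le_mul s hs t ht
  rw [Real.dist_eq] at h1 h2 ⊢
  have habs : |(f s - g s) - (f t - g t)| ≤ |f s - f t| + |g s - g t| := by
    rw [show (f s - g s) - (f t - g t) = (f s - f t) + -(g s - g t) by ring]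
    exact (abs_add_le _ _).trans (by rw [abs_neg])
  push_cast
  linarith

lemma LocLip.const_mul {f : ℝ → ℝ} (c : ℝ) (hf : LocLip f) :
    LocLip (fun t => c * f t) := by
  intro a b
  obtain ⟨Kf, hKf⟩ := hf a b
  refine ⟨Real.toNNReal |c| * Kf, LipschitzOnWith.of_dist_le_mul fun s hs t ht => ?_⟩
  have h1 := hKf.dist_le_mul s hs t ht
  rw [Real.dist_eq] at h1 ⊢
  have : |c * f s - c * f t| = |c| * |f s - f t| := by
    rw [← abs_mul]; ring_nf
  rw [this]
  push_cast [Real.coe_toNNReal _ (abs_nonneg c)]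
  have := abs_nonneg c
  nlinarith [abs_nonneg (f s - f t)]

lemma LocLip.mul {f g : ℝ → ℝ} (hf : LocLip f) (hg : LocLip g) :
    LocLip (fun t => f t * g t) := by
  intro a b
  obtain ⟨Kf, hKf⟩ := hf a b
  obtain ⟨Kg, hKg⟩ := hg a b
  obtain ⟨Cf, hCf⟩ := isCompact_Icc.exists_bound_of_continuousOn hKf.continuousOn
  obtain ⟨Cg, hCg⟩ := isCompact_Icc.exists_bound_of_continuousOn hKg.continuousOn
  refine ⟨Real.toNNReal (|Cf| * Kg + |Cg| * Kf),
    LipschitzOnWith.of_dist_le_mul fun s hs t ht => ?_⟩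
  have h1 := hKf.dist_le_mul s hs t ht
  have h2 := hKg.dist_le_mul s hs t ht
  simp only [Real.dist_eq] at h1 h2 ⊢
  have hfs : |f s| ≤ |Cf| := (hCf s hs).trans (le_abs_self _)
  have hgt : |g t| ≤ |Cg| := (hCg t ht).trans (le_abs_self _)
  have key : |f s * g s - f t * g t| ≤ |Cf| * |g s - g t| + |Cg| * |f s - f t| := by
    have : f s * g s - f t * g t = f s * (g s - g t) + g t * (f s - f t) := by ring
    rw [this]
    calc |f s * (g s - g t) + g t * (f s - f t)|
        ≤ |f s * (g s - g t)| + |g t * (f s - f t)| := abs_add_le _ _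
      _ = |f s| * |g s - g t| + |g t| * |f s - f t| := by rw [abs_mul, abs_mul]
      _ ≤ |Cf| * |g s - g t| + |Cg| * |f s - f t| := by
          have := abs_nonneg (g s - g t)
          have := abs_nonneg (f s - f t)
          nlinarith
  have hle : |Cf| * Kg + |Cg| * Kf ≤ ((Real.toNNReal (|Cf| * Kg + |Cg| * Kf) : NNReal) : ℝ) :=
    Real.le_coe_toNNReal _
  have hKgnn : (0:ℝ) ≤ Kg := Kg.coe_nonneg
  have hKfnn : (0:ℝ) ≤ Kf := Kf.coe_nonneg
  have habsCf := abs_nonneg Cf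
  have habsCg := abs_nonneg Cg
  have hd : (0:ℝ) ≤ |s - t| := abs_nonneg _
  calc |f s * g s - f t * g t| ≤ |Cf| * |g s - g t| + |Cg| * |f s - f t| := key
    _ ≤ |Cf| * (Kg * |s - t|) + |Cg| * (Kf * |s - t|) := by nlinarith
    _ = (|Cf| * Kg + |Cg| * Kf) * |s - t| := by ring
    _ ≤ ((Real.toNNReal (|Cf| * Kg + |Cg| * Kf) : NNReal) : ℝ) * |s - t| := by nlinarith

theorem cartan_normal_time_identity
    (u₁ u₂ x y z v w : ℝ → ℝ) (φ₁ φ₂ φ₃ φ₄ φ₅ : ℝ)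
    (hu₁m : Measurable u₁) (hu₂m : Measurable u₂)
    (hu₁b : ∃ C, ∀ t, |u₁ t| ≤ C) (hu₂b : ∃ C, ∀ t, |u₂ t| ≤ C)
    (hx : ∃ K, LipschitzWith K x) (hy : ∃ K, LipschitzWith K y)
    (hz : ∃ K, LipschitzWith K z) (hv : ∃ K, LipschitzWith K v)
    (hw : ∃ K, LipschitzWith K w)
    (hx0 : x 0 = 0) (hy0 : y 0 = 0) (hz0 : z 0 = 0) (hv0 : v 0 = 0) (hw0 : w 0 = 0)
    (hx' : ∀ᵐ t ∂(volume : Measure ℝ), HasDerivAt x (u₁ t) t)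
    (hy' : ∀ᵐ t ∂(volume : Measure ℝ), HasDerivAt y (u₂ t) t)
    (hz' : ∀ᵐ t ∂(volume : Measure ℝ),
      HasDerivAt z ((x t * u₂ t - y t * u₁ t) / 2) t)
    (hv' : ∀ᵐ t ∂(volume : Measure ℝ),
      HasDerivAt v (-(z t + x t * y t / 6) * u₁ t / 2 + x t ^ 2 / 12 * u₂ t) t)
    (hw' : ∀ᵐ t ∂(volume : Measure ℝ),
      HasDerivAt w (-(y t ^ 2 / 12) * u₁ t - (z t - x t * y t / 6) * u₂ t / 2) t)
    (h₁ h₂ : ℝ → ℝ)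
    (hh₁ : ∀ t, h₁ t = φ₁ - (φ₃ + φ₄ * x t / 2 + φ₅ * y t / 2) * y t - φ₄ * z t)
    (hh₂ : ∀ t, h₂ t = φ₂ + (φ₃ + φ₄ * x t / 2 + φ₅ * y t / 2) * x t - φ₅ * z t)
    (hM : ∀ᵐ t ∂(volume : Measure ℝ), h₁ t * u₁ t + h₂ t * u₂ t = 1) :
    ∀ t : ℝ, φ₁ * x t + φ₂ * y t + 2 * φ₃ * z t + 3 * φ₄ * v t + 3 * φ₅ * w t
      + φ₄ / 2 * (x t * z t) + φ₅ / 2 * (y t * z t) = t := by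
  set D : ℝ → ℝ := fun t => φ₁ * x t + φ₂ * y t + 2 * φ₃ * z t + 3 * φ₄ * v t
      + 3 * φ₅ * w t + φ₄ / 2 * (x t * z t) + φ₅ / 2 * (y t * z t) - t with hD_def
  have hxl : LocLip x := LocLip.of_lip hx
  have hyl : LocLip y := LocLip.of_lip hy
  have hzl : LocLip z := LocLip.of_lip hz
  have hvl : LocLip v := LocLip.of_lip hv
  have hwl : LocLip w := LocLip.of_lip hw
  have hDl : LocLip D :=
    ((((((hxl.const_mul φ₁).add (hyl.const_mul φ₂)).add (hzl.const_mul (2 * φ₃))).add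
      (hvl.const_mul (3 * φ₄))).add (hwl.const_mul (3 * φ₅))).add
      ((hxl.mul hzl).const_mul (φ₄ / 2))).add ((hyl.mul hzl).const_mul (φ₅ / 2)) |>.sub locLip_id
  have hae : ∀ᵐ t ∂(volume : Measure ℝ), HasDerivAt D 0 t := by
    filter_upwards [hx', hy', hz', hv', hw', hM] with t hxt hyt hzt hvt hwt hMt
    have hD : HasDerivAt D
        (φ₁ * u₁ t + φ₂ * u₂ t + 2 * φ₃ * ((x t * u₂ t - y t * u₁ t) / 2)
          + 3 * φ₄ * (-(z t + x t * y t / 6) * u₁ t / 2 + x t ^ 2 / 12 * u₂ t)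
          + 3 * φ₅ * (-(y t ^ 2 / 12) * u₁ t - (z t - x t * y t / 6) * u₂ t / 2)
          + φ₄ / 2 * (u₁ t * z t + x t * ((x t * u₂ t - y t * u₁ t) / 2))
          + φ₅ / 2 * (u₂ t * z t + y t * ((x t * u₂ t - y t * u₁ t) / 2)) - 1) t :=
      ((((((hxt.const_mul φ₁).add (hyt.const_mul φ₂)).add (hzt.const_mul (2 * φ₃))).add
        (hvt.const_mul (3 * φ₄))).add (hwt.const_mul (3 * φ₅))).add
        ((hxt.mul hzt).const_mul (φ₄ / 2))).add ((hyt.mul hzt).const_mul (φ₅ / 2)) |>.sub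
        (hasDerivAt_id' t)
    convert hD using 1
    rw [hh₁ t, hh₂ t] at hMt
    linear_combination -hMt
  have hD0 : D 0 = 0 := by
    simp [hD_def, hx0, hy0, hz0, hv0, hw0]
  intro t
  have hDt : D t = 0 := by
    rcases le_total 0 t with h | h
    · obtain ⟨K, hK⟩ := hDl 0 t
      rw [const_of_ae_deriv_zero h hK hae, hD0]
    · obtain ⟨K, hK⟩ := hDl t 0
      rw [← const_of_ae_deriv_zero h hK hae, hD0]
  have := hDt
  rw [hD_def] at this
  linarith
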